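/- Let q, N be positive integers, A ⊆ ℕ with |A ∩ (j+qℤ)| ≥ N+1 for all 0 ≤ j < q, and let (a_k) be a sequence of complex numbers with generating function of the form p(z)/(1-z^q)^{N+1}, deg p < q(N+1). Then for every k ∈ ℕ there exist complex coefficients (c_{k,h})_{h∈A₀}, for some finite A₀ ⊆ A, depending only on q, N, A (not on the sequence), such that a_k = ∑_{h∈A₀} c_{k,h} a_h for every such sequence. -/

import Mathlib

set_option maxRecDepth 8000
set_option maxHeartbeats 1000000

open scoped fwdDiff
open Finset

lemma aux_fwdDiff_zero_of_ge {N : ℕ} {b : ℕ → ℂ} (hb : (fwdDiff 1)^[N+1] b = 0) {k : ℕ}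
    (hk : N + 1 ≤ k) : (fwdDiff 1)^[k] b = 0 := by
  obtain ⟨d, rfl⟩ := Nat.exists_eq_add_of_le hk
  rw [add_comm, Function.iterate_add_apply, hb]
  clear hb hk
  induction d with
  | zero => rfl
  | succ d ih =>
    rw [Function.iterate_succ_apply', ih]
    ext n; simp [fwdDiff]

lemma newton_vanish {N : ℕ} {b : ℕ → ℂ} (hb : (fwdDiff 1)^[N+1] b = 0)
    (S : Finset ℕ) (hcard : N < S.card) (hS : ∀ m ∈ S, b m = 0) (n : ℕ) : b n = 0 := by
  have hrep : ∀ m : ℕ, b m = ∑ i ∈ range (N+1), (m.choose i : ℂ) * (fwdDiff 1)^[i] b 0 := by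
    intro m
    have h0 := shift_eq_sum_fwdDiff_iter 1 b m 0
    simp only [zero_add, smul_eq_mul, mul_one, nsmul_eq_mul] at h0
    rw [h0]
    have h1 : ∑ i ∈ range (m+1), (m.choose i : ℂ) * (fwdDiff 1)^[i] b 0
        = ∑ i ∈ range (m+N+2), (m.choose i : ℂ) * (fwdDiff 1)^[i] b 0 := by
      apply Finset.sum_subset (by intro x hx; simp_all; omega)
      intro x _ hx
      simp only [mem_range, not_lt] at hx
      rw [Nat.choose_eq_zero_of_lt (by omega)]
      simp
    have h2 : ∑ i ∈ range (N+1), (m.choose i : ℂ) * (fwdDiff 1)^[i] b 0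
        = ∑ i ∈ range (m+N+2), (m.choose i : ℂ) * (fwdDiff 1)^[i] b 0 := by
      apply Finset.sum_subset (by intro x hx; simp_all; omega)
      intro x _ hx
      simp only [mem_range, not_lt] at hx
      rw [aux_fwdDiff_zero_of_ge hb (by omega)]
      simp
    rw [h1, ← h2]
  set P : Polynomial ℂ :=
    ∑ i ∈ range (N+1), Polynomial.C ((fwdDiff 1)^[i] b 0 * (i.factorial : ℂ)⁻¹) * descPochhammer ℂ i with hP
  have hPeval : ∀ m : ℕ, P.eval (m : ℂ) = b m := by
    intro m
    rw [hrep m, hP]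
    simp only [Polynomial.eval_finset_sum, Polynomial.eval_mul, Polynomial.eval_C,
      descPochhammer_eval_eq_descFactorial]
    apply Finset.sum_congr rfl
    intro i _
    rw [Nat.descFactorial_eq_factorial_mul_choose]
    have : (i.factorial : ℂ) ≠ 0 := by exact_mod_cast i.factorial_ne_zero
    push_cast
    field_simp
  have hdeg : P.natDegree ≤ N := by
    apply Polynomial.natDegree_sum_le_of_forall_le
    intro i hi
    refine le_trans (Polynomial.natDegree_C_mul_le _ _) ?_
    rw [descPochhammer_natDegree]
    simp only [mem_range] at hi; omega
  have hP0 : P = 0 := by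
    apply Polynomial.eq_zero_of_natDegree_lt_card_of_eval_eq_zero P
      (f := fun s : S => ((s : ℕ) : ℂ))
      (Nat.cast_injective.comp Subtype.val_injective)
    · intro i; rw [hPeval]; exact hS _ i.2
    · rw [Fintype.card_coe]; omega
  rw [← hPeval n, hP0, Polynomial.eval_zero]

open Finset

lemma rec_vanish {q N : ℕ} {a : ℕ → ℂ} {p : Polynomial ℂ}
    (hdeg : p.degree < (q * (N + 1) : ℕ))
    (hgen : PowerSeries.mk a * (1 - PowerSeries.X ^ q) ^ (N + 1) = (p : PowerSeries ℂ))
    (j : ℕ) :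
    (fwdDiff 1)^[N+1] (fun m => a (j + q * m)) = 0 := by
  have hexp : (1 - PowerSeries.X ^ q : PowerSeries ℂ) ^ (N+1)
      = ∑ i ∈ range (N+2), PowerSeries.C ((-1:ℂ)^i * ((N+1).choose i))
          * PowerSeries.X^(q*i) := by
    have h := add_pow (-(PowerSeries.X ^ q) : PowerSeries ℂ) 1 (N+1)
    rw [sub_eq_add_neg, add_comm, h]
    apply Finset.sum_congr rfl
    intro i _
    rw [one_pow, mul_one, neg_pow, pow_mul, map_mul, map_pow, map_neg, map_one,
      ← map_natCast (PowerSeries.C (R := ℂ)) ((N+1).choose i)]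
    ring
  have hco : ∀ n : ℕ, q * (N+1) ≤ n →
      ∑ i ∈ range (N+2), ((-1 : ℂ)^i * ((N+1).choose i)) * a (n - q*i) = 0 := by
    intro n hn
    have h1 : (PowerSeries.coeff n) (PowerSeries.mk a * (1 - PowerSeries.X ^ q) ^ (N + 1)) = 0 := by
      rw [hgen, Polynomial.coeff_coe]
      exact Polynomial.coeff_eq_zero_of_degree_lt (lt_of_lt_of_le hdeg (by exact_mod_cast hn))
    rw [hexp, Finset.mul_sum] at h1
    rw [← h1, map_sum]
    apply Finset.sum_congr rfl
    intro i hi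
    simp only [mem_range] at hi
    have hqi : q * i ≤ n := le_trans (Nat.mul_le_mul_left q (by omega)) hn
    rw [mul_left_comm, PowerSeries.coeff_C_mul, PowerSeries.coeff_mul_X_pow', if_pos hqi,
      PowerSeries.coeff_mk]
  have hco' : ∀ m : ℕ, ∑ i ∈ range (N+2),
      ((-1 : ℂ)^i * ((N+1).choose i)) * a (j + q*(m + (N+1) - i)) = 0 := by
    intro m
    have hn : q * (N+1) ≤ j + q*(m + (N+1)) := by
      have : q * (N+1) ≤ q * (m + (N+1)) := Nat.mul_le_mul_left q (by omega)
      omega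
    rw [← hco (j + q*(m + (N+1))) hn]
    apply Finset.sum_congr rfl
    intro i hi
    simp only [mem_range] at hi
    congr 2
    obtain ⟨d, hd⟩ : ∃ d, m + (N+1) = i + d := ⟨m + (N+1) - i, by omega⟩
    rw [show m + (N+1) - i = d by omega, hd, Nat.mul_add]
    omega
  ext m
  have h2 := fwdDiff_iter_eq_sum_shift (1:ℕ) (fun m' => a (j + q * m')) (N+1) m
  rw [Pi.zero_apply, h2, ← Finset.sum_range_reflect, ← hco' m]
  apply Finset.sum_congr rfl
  intro i hi
  simp only [mem_range] at hi
  have h1 : N + 2 - 1 - i = N + 1 - i := by omega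
  have h2 : N + 1 - (N + 1 - i) = i := by omega
  have h3 : (N+1).choose (N+1-i) = (N+1).choose i := Nat.choose_symm (by omega)
  have h4 : m + (N + 1 - i) • 1 = m + (N+1) - i := by simp; omega
  rw [h1, h2, h3, h4, zsmul_eq_mul]
  push_cast
  ring

open Finset

section helper
variable (q N : ℕ)

noncomputable def stmtD : PowerSeries ℂ := (1 - PowerSeries.X ^ q) ^ (N + 1)

lemma stmtD_const (hq : 0 < q) : PowerSeries.constantCoeff (stmtD q N) ≠ 0 := by
  have : PowerSeries.constantCoeff (stmtD q N) = 1 := by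
    rw [stmtD, map_pow, map_sub, map_one, map_pow, PowerSeries.constantCoeff_X,
      zero_pow hq.ne', sub_zero, one_pow]
  rw [this]; exact one_ne_zero

noncomputable def stmtL (h : ℕ) :
    Polynomial.degreeLT ℂ (q * (N + 1)) →ₗ[ℂ] ℂ where
  toFun p := PowerSeries.coeff h (((p : Polynomial ℂ) : PowerSeries ℂ) * (stmtD q N)⁻¹)
  map_add' x y := by
    simp only [Submodule.coe_add, Polynomial.coe_add, add_mul, map_add]
  map_smul' r x := by
    simp only [SetLike.val_smul, RingHom.id_apply]
    rw [Polynomial.smul_eq_C_mul, Polynomial.coe_mul, Polynomial.coe_C, mul_assoc,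
      PowerSeries.coeff_C_mul, smul_eq_mul]

end helper

theorem stmt14 (q N : ℕ) (hq : 0 < q) (hN : 0 < N) (A : Set ℕ)
    (hA : ∀ j < q, (N + 1 : ℕ∞) ≤ {k | k ∈ A ∧ k % q = j}.encard) :
    ∀ k : ℕ, ∃ (A₀ : Finset ℕ) (c : ℕ → ℂ), ↑A₀ ⊆ A ∧
      ∀ (a : ℕ → ℂ) (p : Polynomial ℂ), p.degree < (q * (N + 1) : ℕ) →
        PowerSeries.mk a * (1 - PowerSeries.X ^ q) ^ (N + 1) = (p : PowerSeries ℂ) →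
        a k = ∑ h ∈ A₀, c h * a h := by
  intro k
  classical
  -- choose finsets of size N+1 in each residue class
  have hT : ∀ j : Fin q, ∃ t : Finset ℕ,
      (↑t : Set ℕ) ⊆ {k' | k' ∈ A ∧ k' % q = (j : ℕ)} ∧ t.card = N + 1 := by
    intro j
    obtain ⟨t, hsub, hcard⟩ := Set.exists_subset_encard_eq (hA j j.2)
    have hfin : t.Finite := Set.finite_of_encard_eq_coe (show t.encard = ((N+1 : ℕ) : ℕ∞) by exact_mod_cast hcard)
    refine ⟨hfin.toFinset, by simpa using hsub, ?_⟩
    rw [hfin.encard_eq_coe_toFinset_card] at hcard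
    exact_mod_cast hcard
  choose T hT1 hT2 using hT
  set A₀ : Finset ℕ := Finset.univ.biUnion T with hA₀
  have hmemA₀ : ∀ (j : Fin q) (x : ℕ), x ∈ T j → x ∈ A₀ := by
    intro j x hx
    rw [hA₀, Finset.mem_biUnion]
    exact ⟨j, Finset.mem_univ j, hx⟩
  have hTA : ∀ (j : Fin q) (x : ℕ), x ∈ T j → x ∈ A ∧ x % q = (j : ℕ) := by
    intro j x hx
    exact hT1 j (by exact_mod_cast Finset.mem_coe.mpr hx)
  -- finite dimensionality
  haveI : FiniteDimensional ℂ (Polynomial.degreeLT ℂ (q * (N + 1))) :=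
    (Polynomial.degreeLTEquiv ℂ (q * (N + 1))).symm.finiteDimensional
  -- kernel inclusion
  have hu : (stmtD q N)⁻¹ * stmtD q N = 1 :=
    PowerSeries.inv_mul_cancel _ (stmtD_const q N hq)
  have hker : (⨅ i : {x // x ∈ A₀}, LinearMap.ker (stmtL q N ↑i))
      ≤ LinearMap.ker (stmtL q N k) := by
    intro p hp
    simp only [Submodule.mem_iInf, LinearMap.mem_ker] at hp ⊢
    set a : ℕ → ℂ := fun n =>
      PowerSeries.coeff n (((p : Polynomial ℂ) : PowerSeries ℂ) * (stmtD q N)⁻¹) with ha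
    have hLa : ∀ n : ℕ, stmtL q N n p = a n := fun n => rfl
    have hmk : PowerSeries.mk a
        = ((p : Polynomial ℂ) : PowerSeries ℂ) * (stmtD q N)⁻¹ := by
      ext n; rw [PowerSeries.coeff_mk]
    have hgen : PowerSeries.mk a * (1 - PowerSeries.X ^ q) ^ (N + 1)
        = (((p : Polynomial ℂ) : Polynomial ℂ) : PowerSeries ℂ) := by
      rw [hmk, mul_assoc, ← stmtD, hu, mul_one]
    have hdeg : ((p : Polynomial ℂ)).degree < ((q * (N + 1) : ℕ) : WithBot ℕ) :=
      Polynomial.mem_degreeLT.1 p.2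
    have hvan : ∀ n : ℕ, a n = 0 := by
      intro n
      have hj : n % q < q := Nat.mod_lt _ hq
      have hb := rec_vanish hdeg hgen (n % q)
      set t := T ⟨n % q, hj⟩ with ht
      have hinj : Set.InjOn (· / q) ↑t := by
        intro x hx y hy hxy
        have hx' := (hTA _ _ (Finset.mem_coe.mp hx)).2
        have hy' := (hTA _ _ (Finset.mem_coe.mp hy)).2
        have ex : q * (x / q) + x % q = x := Nat.div_add_mod x q
        have ey : q * (y / q) + y % q = y := Nat.div_add_mod y q
        simp only at hxy
        rw [hxy, hx'] at ex
        rw [hy'] at ey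
        omega
      have hcardS : N < (t.image (· / q)).card := by
        rw [Finset.card_image_of_injOn hinj, hT2]; omega
      have hSvan : ∀ m ∈ t.image (· / q), (fun m' => a (n % q + q * m')) m = 0 := by
        intro m hm
        obtain ⟨x, hx, rfl⟩ := Finset.mem_image.mp hm
        have hx1 := (hTA _ _ hx).2
        have hx2 : x ∈ A₀ := hmemA₀ _ _ hx
        have : n % q + q * (x / q) = x := by
          have := Nat.mod_add_div x q
          simp only at hx1
          omega
        simp only [this]
        rw [← hLa x]
        exact hp ⟨x, hx2⟩
      have := newton_vanish hb (t.image (· / q)) hcardS hSvan (n / q)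
      simpa [Nat.mod_add_div] using this
    rw [hLa]; exact hvan k
  have hspan := mem_span_of_iInf_ker_le_ker
    (L := fun i : {x // x ∈ A₀} => stmtL q N ↑i) (K := stmtL q N k) hker
  obtain ⟨c', hc'⟩ := (Submodule.mem_span_range_iff_exists_fun ℂ).1 hspan
  set c : ℕ → ℂ := fun h => if hh : h ∈ A₀ then c' ⟨h, hh⟩ else 0 with hc
  refine ⟨A₀, c, ?_, ?_⟩
  · intro x hx
    rw [hA₀] at hx
    simp only [Finset.coe_biUnion, Set.mem_iUnion, Finset.mem_coe] at hx
    obtain ⟨j, _, hj⟩ := hx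
    exact (hTA j x hj).1
  · intro a p hdeg hgen
    have hpV : p ∈ Polynomial.degreeLT ℂ (q * (N + 1)) := Polynomial.mem_degreeLT.2 hdeg
    have hmk : PowerSeries.mk a = (p : PowerSeries ℂ) * (stmtD q N)⁻¹ := by
      have h1 : PowerSeries.mk a * stmtD q N = (p : PowerSeries ℂ) := hgen
      rw [← h1, mul_assoc, mul_comm (stmtD q N) _, hu, mul_one]
    have haL : ∀ n : ℕ, a n = stmtL q N n ⟨p, hpV⟩ := by
      intro n
      show a n = PowerSeries.coeff n ((p : PowerSeries ℂ) * (stmtD q N)⁻¹)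
      rw [← hmk, PowerSeries.coeff_mk]
    have h1 : stmtL q N k ⟨p, hpV⟩
        = ∑ i : {x // x ∈ A₀}, c' i * stmtL q N ↑i ⟨p, hpV⟩ := by
      rw [← hc']
      simp only [LinearMap.coe_sum, Finset.sum_apply, LinearMap.smul_apply, smul_eq_mul]
    rw [haL k, h1]
    rw [← Finset.sum_coe_sort A₀ (fun h => c h * a h)]
    apply Finset.sum_congr rfl
    intro i _
    rw [hc, ← haL ↑i]
    simp only [i.2, dif_pos]
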